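/- The set S = ∪_{N≥2} Δ_N(Σ_N) ⊆ ℕ^ℕ is a scrambled set for the shift map σ: for any distinct u, v ∈ S, limsup_n d(σ^n u, σ^n v) > 0 and liminf_n d(σ^n u, σ^n v) = 0, where d(x,y) = 2^{-inf{j≥0 : x_{j+1} ≠ y_{j+1}}}. -/
import Mathlib


open MeasureTheory Filter Set

/-- The Gauss map `T(x) = 1/x - ⌊1/x⌋` (with `T 0 = 0`). -/
noncomputable def gaussMap (x : ℝ) : ℝ := if x = 0 then 0 else 1/x - ⌊1/x⌋

/-- `pquot x n` is the `(n+1)`-st partial quotient `a_{n+1}(x) = ⌊1 / T^n x⌋`. -/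
noncomputable def pquot (x : ℝ) (n : ℕ) : ℕ := (⌊1 / (gaussMap^[n] x)⌋).toNat

/-- One step of the continuant recursion `q_{j+1} = b_{j+1} q_j + q_{j-1}`. -/
def cdStep (p : ℕ × ℕ) (b : ℕ) : ℕ × ℕ := (b * p.1 + p.2, p.1)

/-- Denominator `q_n(b_1,…,b_n)` of the finite continued fraction `[b_1,…,b_n]`. -/
def contDenom (w : List ℕ) : ℕ := (w.foldl cdStep (1, 0)).1

/-- Numerator `p_n(b_1,…,b_n)` of the finite continued fraction `[b_1,…,b_n]`. -/
def contNum (w : List ℕ) : ℕ := (w.foldl cdStep (0, 1)).1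

/-- The continued fraction cylinder `I(w) = {x ∈ [0,1) : a_i(x) = w_i, 1 ≤ i ≤ |w|}`. -/
def cyl (w : List ℕ) : Set ℝ :=
  {x | x ∈ Set.Ico (0:ℝ) 1 ∧ ∀ i < w.length, pquot x i = w.getD i 0}

open scoped Classical in
/-- The metric `d(x,y) = 2^{-inf{j ≥ 0 : x_{j+1} ≠ y_{j+1}}}` on `ℕ^ℕ` (0-indexed). -/
noncomputable def dseq (x y : ℕ → ℕ) : ℝ :=
  if h : ∃ j, x j ≠ y j then (2:ℝ)⁻¹ ^ (Nat.find h) else 0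

/-- The one-sided shift on `ℕ^ℕ`. -/
def shift (x : ℕ → ℕ) : ℕ → ℕ := fun n => x (n+1)

/-- The symbolic space `Σ_N = {1,…,N}^ℕ` inside `ℕ^ℕ`. -/
def SigmaN (N : ℕ) : Set (ℕ → ℕ) := {x | ∀ i, 1 ≤ x i ∧ x i ≤ N}

/-- `g_N(x) = (N, 1, x_1, 1,1, x_1,x_2, 1,1,1, x_1,x_2,x_3, …)` (0-indexed). -/
def gN (N : ℕ) (x : ℕ → ℕ) : ℕ → ℕ := fun n =>
  if n = 0 then N else
    let j := n - 1
    let k := (Nat.sqrt (4*j+1) + 1) / 2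
    let o := j - k*(k-1)
    if o < k then 1 else x (o - k)

/-- `Θ_N(x) = (x_1, x_1,x_2, x_1,x_2,x_3, …)` (0-indexed). -/
def thetaN (x : ℕ → ℕ) : ℕ → ℕ := fun j =>
  let k := (Nat.sqrt (8*j+1) + 1) / 2
  x (j - k*(k-1)/2)

/-- The index set `R = ∪_m {m³ + t : 1 ≤ t ≤ m}`. -/
def inR (n : ℕ) : Prop := ∃ m, 1 ≤ m ∧ m^3 + 1 ≤ n ∧ n ≤ m^3 + m

instance : DecidablePred inR := fun n =>
  decidable_of_iff (∃ m ∈ Finset.Icc 1 n, m^3 + 1 ≤ n ∧ n ≤ m^3 + m) (by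
    constructor
    · rintro ⟨m, hm, h⟩; exact ⟨m, (Finset.mem_Icc.mp hm).1, h⟩
    · rintro ⟨m, h1, h2, h3⟩
      refine ⟨m, Finset.mem_Icc.mpr ⟨h1, ?_⟩, h2, h3⟩
      have : m ≤ m^3 := Nat.le_self_pow (by norm_num) m
      omega)

/-- `t(n) = #{k ≥ 1 : r_k ≤ n}`, the number of elements of `R` at most `n`. -/
def tcount (n : ℕ) : ℕ := ((Finset.Icc 1 n).filter inR).card

/-- `Ψ_N(x,y)`: put `y_k` at position `r_k ∈ R` and fill the other
positions with the entries of `x` in order (positions are 1-indexed `i+1`). -/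
def psiN (x y : ℕ → ℕ) : ℕ → ℕ := fun i =>
  let n := i + 1
  if inR n then y (tcount n - 1) else x (n - tcount n - 1)

/-- `Δ_N(x) = Ψ_N(x, Θ_N(g_N(x)))`. -/
def deltaN (N : ℕ) (x : ℕ → ℕ) : ℕ → ℕ := psiN x (thetaN (gN N x))

/-- The value `[a_1, a_2, …]` of an infinite continued fraction, as the limit
of its convergents `p_n/q_n`. -/
noncomputable def cfVal (a : ℕ → ℕ) : ℝ :=
  limUnder atTop fun n => (contNum (List.ofFn fun i : Fin n => a i) : ℝ) /
    (contDenom (List.ofFn fun i : Fin n => a i) : ℝ)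

/-- The orbit of `x` under the Gauss map is dense in `[0,1]`. -/
def gaussOrbitDense (x : ℝ) : Prop :=
  Set.Icc (0:ℝ) 1 ⊆ closure (Set.range fun n => gaussMap^[n] x)

/-- The set `D` of points of `[0,1)` with dense Gauss orbit. -/
def Dset : Set ℝ := {x ∈ Set.Ico (0:ℝ) 1 | gaussOrbitDense x}

/-- The set `D^c` of points of `[0,1)` with non-dense Gauss orbit. -/
def Dcset : Set ℝ := {x ∈ Set.Ico (0:ℝ) 1 | ¬ gaussOrbitDense x}


/-- The set `S = ∪_{N ≥ 2} Δ_N(Σ_N)`. -/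
def Sset : Set (ℕ → ℕ) := ⋃ N ∈ {N : ℕ | 2 ≤ N}, deltaN N '' SigmaN N


section Helpers

lemma sqrtT (d r : ℕ) (hr : r ≤ d) :
    (Nat.sqrt (8*((d+1)*d/2 + r)+1) + 1)/2 = d+1 := by
  have hdvd : 2 ∣ (d+1)*d := by rw [mul_comm]; exact (Nat.even_mul_succ_self d).two_dvd
  have he : (d+1)*d/2*2 = (d+1)*d := Nat.div_mul_cancel hdvd
  set X := (d+1)*d/2 with hX
  have hq : 8*(X + r)+1 = 4*((d+1)*d) + 8*r + 1 := by omega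
  have h1 : 2*d+1 ≤ Nat.sqrt (8*(X+r)+1) := Nat.le_sqrt.mpr (by rw [hq]; nlinarith)
  have h2 : Nat.sqrt (8*(X+r)+1) < 2*d+3 := Nat.sqrt_lt.mpr (by rw [hq]; nlinarith)
  omega

lemma sqrtG (d o : ℕ) (ho : o ≤ 2*d+1) :
    (Nat.sqrt (4*((d+1)*d + o)+1) + 1)/2 = d+1 := by
  have h1 : 2*d+1 ≤ Nat.sqrt (4*((d+1)*d + o)+1) := Nat.le_sqrt.mpr (by nlinarith)
  have h2 : Nat.sqrt (4*((d+1)*d + o)+1) < 2*d+3 := Nat.sqrt_lt.mpr (by nlinarith)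
  omega

lemma gN_succ (N : ℕ) (x : ℕ → ℕ) (j : ℕ) :
    gN N x (j+1) =
      if j - ((Nat.sqrt (4*j+1)+1)/2) * (((Nat.sqrt (4*j+1)+1)/2) - 1) < (Nat.sqrt (4*j+1)+1)/2
      then 1
      else x (j - ((Nat.sqrt (4*j+1)+1)/2) * (((Nat.sqrt (4*j+1)+1)/2) - 1) - (Nat.sqrt (4*j+1)+1)/2) := by
  simp only [gN, Nat.add_sub_cancel]
  rw [if_neg (by omega)]

lemma thetaN_eval (z : ℕ → ℕ) (m r : ℕ) (hm : 1 ≤ m) (hr : r < m) :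
    thetaN z (m*(m-1)/2 + r) = z r := by
  obtain ⟨d, rfl⟩ : ∃ d, m = d+1 := ⟨m-1, by omega⟩
  simp only [thetaN, Nat.add_sub_cancel]
  rw [sqrtT d r (by omega)]
  simp only [Nat.add_sub_cancel]
  congr 1
  have hdvd : 2 ∣ (d+1)*d := by rw [mul_comm]; exact (Nat.even_mul_succ_self d).two_dvd
  have he : (d+1)*d/2*2 = (d+1)*d := Nat.div_mul_cancel hdvd
  omega

lemma gN_eval_one (N : ℕ) (x : ℕ → ℕ) (k o : ℕ) (hk : 1 ≤ k) (ho : o < k) :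
    gN N x (k*(k-1)+1+o) = 1 := by
  obtain ⟨d, rfl⟩ : ∃ d, k = d+1 := ⟨k-1, by omega⟩
  have hn : (d+1)*((d+1)-1)+1+o = ((d+1)*d + o) + 1 := by
    simp only [Nat.add_sub_cancel]; omega
  rw [hn, gN_succ, sqrtG d o (by omega)]
  rw [if_pos (by simp only [Nat.add_sub_cancel]; omega)]

lemma gN_eval_x (N : ℕ) (x : ℕ → ℕ) (k j : ℕ) (hk : 1 ≤ k) (hj : j < k) :
    gN N x (k*k+1+j) = x j := by
  obtain ⟨d, rfl⟩ : ∃ d, k = d+1 := ⟨k-1, by omega⟩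
  have hmul : (d+1)*(d+1) = (d+1)*d + (d+1) := by ring
  have hn : (d+1)*(d+1)+1+j = ((d+1)*d + (d+1+j)) + 1 := by omega
  rw [hn, gN_succ, sqrtG d (d+1+j) (by omega)]
  rw [if_neg (by simp only [Nat.add_sub_cancel]; omega)]
  congr 1
  simp only [Nat.add_sub_cancel]
  omega

lemma gN_zero (N : ℕ) (x : ℕ → ℕ) : gN N x 0 = N := rfl

lemma inR_mk (m t : ℕ) (hm : 1 ≤ m) (ht1 : 1 ≤ t) (ht2 : t ≤ m) : inR (m^3 + t) :=
  ⟨m, hm, by omega, by omega⟩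

lemma not_inR_gap (m n : ℕ) (hm : 1 ≤ m) (h1 : m^3 + m < n) (h2 : n ≤ (m+1)^3) : ¬ inR n := by
  rintro ⟨k, hk1, hk2, hk3⟩
  rcases le_or_gt k m with h | h
  · have : k^3 ≤ m^3 := Nat.pow_le_pow_left h 3
    omega
  · have : (m+1)^3 ≤ k^3 := Nat.pow_le_pow_left h 3
    omega

lemma tcount_succ (n : ℕ) : tcount (n+1) = tcount n + if inR (n+1) then 1 else 0 := by
  have h : Finset.Icc 1 (n+1) = insert (n+1) (Finset.Icc 1 n) := by
    ext a; simp [Finset.mem_Icc, Finset.mem_insert]; omega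
  rw [tcount, h, Finset.filter_insert]
  split
  · rw [Finset.card_insert_of_notMem (by simp)]; rfl
  · simp [tcount]

lemma tcount_const (a b : ℕ) (hab : a ≤ b) (h : ∀ n, a < n → n ≤ b → ¬ inR n) :
    tcount b = tcount a := by
  induction b, hab using Nat.le_induction with
  | base => rfl
  | succ b hab ih =>
    rw [tcount_succ, if_neg (h (b+1) (by omega) (by omega))]
    simp [ih (fun n h1 h2 => h n h1 (by omega))]

lemma tcount_add (m : ℕ) (hm : 1 ≤ m) : ∀ t, t ≤ m → tcount (m^3 + t) = tcount (m^3) + t := by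
  intro t
  induction t with
  | zero => simp
  | succ t ih =>
    intro ht
    rw [show m^3 + (t+1) = (m^3+t)+1 by omega, tcount_succ]
    rw [if_pos (show inR (m^3+t+1) by
      have := inR_mk m (t+1) hm (by omega) ht
      rwa [show m^3+(t+1) = m^3+t+1 by omega] at this)]
    rw [ih (by omega)]; omega

lemma tcount_cube : ∀ m, 1 ≤ m → tcount (m^3) = m*(m-1)/2 := by
  intro m hm
  induction m with
  | zero => omega
  | succ m ih =>
    rcases Nat.eq_or_lt_of_le hm with h | h
    · have h1 : (1:ℕ)^3 = 1 := by norm_num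
      have : tcount 1 = 0 := by
        rw [show (1:ℕ) = 0 + 1 by rfl, tcount_succ, if_neg]
        · rfl
        · rintro ⟨k, hk1, hk2, hk3⟩
          have : 1 ≤ k^3 := Nat.one_le_pow 3 k hk1
          omega
      simp [← h, this]
    · have hm1 : 1 ≤ m := by omega
      have e1 : tcount ((m+1)^3) = tcount (m^3 + m) := by
        apply tcount_const
        · have : m^3 ≤ (m+1)^3 := Nat.pow_le_pow_left (by omega) 3
          have : m ≤ m^3 := Nat.le_self_pow (by norm_num) m
          nlinarith [Nat.pow_le_pow_left (show m ≤ m+1 by omega) 3]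
        · intro n h1 h2; exact not_inR_gap m n hm1 h1 h2
      rw [e1, tcount_add m hm1 m le_rfl, ih hm1]
      have h2 : m*(m-1)/2*2 = m*(m-1) := Nat.div_mul_cancel
        (by have hc := Nat.even_mul_succ_self (m-1)
            rw [show m - 1 + 1 = m by omega] at hc
            rw [mul_comm]; exact hc.two_dvd)
      have h3 : (m+1)*((m+1)-1)/2*2 = (m+1)*m := Nat.div_mul_cancel
        (by simp only [Nat.add_sub_cancel]; rw [mul_comm]; exact (Nat.even_mul_succ_self m).two_dvd)
      have h4 : m*(m-1) + 2*m = (m+1)*m := by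
        obtain ⟨e, rfl⟩ : ∃ e, m = e+1 := ⟨m-1, by omega⟩
        simp only [Nat.add_sub_cancel]; ring
      omega

lemma tcount_eval (m t : ℕ) (hm : 1 ≤ m) (ht1 : 1 ≤ t) (ht2 : t ≤ m) :
    tcount (m^3 + t) = m*(m-1)/2 + t := by
  rw [tcount_add m hm t ht2, tcount_cube m hm]


lemma delta_eval (N : ℕ) (x : ℕ → ℕ) (m r : ℕ) (hm : 1 ≤ m) (hr : r < m) :
    deltaN N x (m^3 + r) = gN N x r := by
  have h1 : inR (m^3 + r + 1) := by
    have h := inR_mk m (r+1) hm (by omega) (by omega)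
    rwa [show m^3 + (r+1) = m^3 + r + 1 from by omega] at h
  have h2 : tcount (m^3 + r + 1) = m*(m-1)/2 + (r+1) := by
    have h := tcount_eval m (r+1) hm (by omega) (by omega)
    rwa [show m^3 + (r+1) = m^3 + r + 1 from by omega] at h
  simp only [deltaN, psiN]
  rw [if_pos h1, h2, show m*(m-1)/2 + (r+1) - 1 = m*(m-1)/2 + r from by omega,
    thetaN_eval _ m r hm hr]

lemma shift_iter (x : ℕ → ℕ) (n i : ℕ) : (shift^[n] x) i = x (n + i) := by
  induction n generalizing x with
  | zero => simp
  | succ n ih =>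
    rw [Function.iterate_succ_apply, ih]
    simp only [shift]
    congr 1
    omega

lemma dseq_nonneg (x y : ℕ → ℕ) : 0 ≤ dseq x y := by
  simp only [dseq]
  split
  · positivity
  · exact le_refl 0

lemma dseq_le_one (x y : ℕ → ℕ) : dseq x y ≤ 1 := by
  simp only [dseq]
  split
  · exact pow_le_one₀ (by norm_num) (by norm_num)
  · norm_num

lemma dseq_eq_one (x y : ℕ → ℕ) (h : x 0 ≠ y 0) : dseq x y = 1 := by
  simp only [dseq]
  rw [dif_pos ⟨0, h⟩]
  rw [(Nat.find_eq_zero _).mpr h, pow_zero]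

lemma dseq_le_pow (x y : ℕ → ℕ) (L : ℕ) (h : ∀ j < L, x j = y j) :
    dseq x y ≤ (2:ℝ)⁻¹ ^ L := by
  simp only [dseq]
  split
  case isTrue h' =>
    apply pow_le_pow_of_le_one (by norm_num) (by norm_num)
    exact (Nat.le_find_iff h' L).mpr fun m hm => not_not_intro (h m hm)
  case isFalse => positivity

end Helpers

/-- `S` is a scrambled set for the shift on `ℕ^ℕ`. -/
theorem Sset_scrambled : ∀ u ∈ Sset, ∀ v ∈ Sset, u ≠ v →
    0 < Filter.limsup (fun n => dseq (shift^[n] u) (shift^[n] v)) Filter.atTop ∧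
    Filter.liminf (fun n => dseq (shift^[n] u) (shift^[n] v)) Filter.atTop = 0 := by
  intro u hu v hv huv
  simp only [Sset, Set.mem_iUnion, Set.mem_image, Set.mem_setOf_eq, exists_prop] at hu hv
  obtain ⟨N, hN, x, hx, hux⟩ := hu
  obtain ⟨M, hM, y, hy, hvy⟩ := hv
  subst hux hvy
  have hub : IsBoundedUnder (· ≤ ·) atTop
      (fun n => dseq (shift^[n] (deltaN N x)) (shift^[n] (deltaN M y))) :=
    isBoundedUnder_of ⟨1, fun n => dseq_le_one _ _⟩
  have hlbd : IsBoundedUnder (· ≥ ·) atTop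
      (fun n => dseq (shift^[n] (deltaN N x)) (shift^[n] (deltaN M y))) :=
    isBoundedUnder_of ⟨0, fun n => dseq_nonneg _ _⟩
  constructor
  · -- limsup > 0
    have hfreq : ∃ᶠ n in atTop,
        (1:ℝ) ≤ dseq (shift^[n] (deltaN N x)) (shift^[n] (deltaN M y)) := by
      rw [frequently_atTop]
      intro a
      by_cases hNM : N = M
      · subst hNM
        have hxy : x ≠ y := by rintro rfl; exact huv rfl
        obtain ⟨j, hj⟩ := Function.ne_iff.mp hxy
        set k := j + 1 with hk
        set r := k*k + 1 + j with hr
        set m := max (r + 2) (a + 1) with hmdef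
        have hm1 : 1 ≤ m := by omega
        have hm3 : m ≤ m^3 := Nat.le_self_pow (by norm_num) m
        refine ⟨m^3 + r, by omega, ?_⟩
        have hval : ∀ z : ℕ → ℕ, deltaN N z (m^3 + r) = z j := by
          intro z
          rw [delta_eval N z m r (by omega) (by omega),
            gN_eval_x N z k j (by omega) (by omega)]
        have hne : (shift^[m^3+r] (deltaN N x)) 0 ≠ (shift^[m^3+r] (deltaN N y)) 0 := by
          rw [shift_iter, shift_iter, Nat.add_zero, hval x, hval y]
          exact hj
        exact (dseq_eq_one _ _ hne).ge
      · set m := max 1 (a + 1) with hmdef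
        have hm1 : 1 ≤ m := by omega
        have hm3 : m ≤ m^3 := Nat.le_self_pow (by norm_num) m
        refine ⟨m^3, by omega, ?_⟩
        have hvalx : deltaN N x (m^3) = N := by
          have h := delta_eval N x m 0 hm1 (by omega)
          rw [Nat.add_zero] at h
          rw [h, gN_zero]
        have hvaly : deltaN M y (m^3) = M := by
          have h := delta_eval M y m 0 hm1 (by omega)
          rw [Nat.add_zero] at h
          rw [h, gN_zero]
        have hne : (shift^[m^3] (deltaN N x)) 0 ≠ (shift^[m^3] (deltaN M y)) 0 := by
          rw [shift_iter, shift_iter, Nat.add_zero, hvalx, hvaly]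
          exact hNM
        exact (dseq_eq_one _ _ hne).ge
    exact lt_of_lt_of_le one_pos (le_limsup_of_frequently_le hfreq hub)
  · -- liminf = 0
    refine le_antisymm ?_ (le_liminf_of_le hub.isCoboundedUnder_ge
      (Filter.Eventually.of_forall fun n => dseq_nonneg _ _))
    have key : ∀ k : ℕ,
        Filter.liminf (fun n => dseq (shift^[n] (deltaN N x)) (shift^[n] (deltaN M y))) atTop
          ≤ (2:ℝ)⁻¹ ^ (k+1) := by
      intro k
      apply liminf_le_of_frequently_le _ hlbd
      rw [frequently_atTop]
      intro a
      set K := k + 1 with hK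
      have hKK : K*(K-1) + K = K*K := by
        simp only [hK, Nat.add_sub_cancel]; ring
      set m := max (K*K + 1) (a + 1) with hmdef
      have hm1 : 1 ≤ m := by omega
      have hm3 : m ≤ m^3 := Nat.le_self_pow (by norm_num) m
      refine ⟨m^3 + (K*(K-1) + 1), by omega, ?_⟩
      apply dseq_le_pow
      intro i hi
      rw [shift_iter, shift_iter,
        show m^3 + (K*(K-1)+1) + i = m^3 + (K*(K-1)+1+i) from by omega]
      have hval : ∀ (P : ℕ) (z : ℕ → ℕ), deltaN P z (m^3 + (K*(K-1)+1+i)) = 1 := by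
        intro P z
        rw [delta_eval P z m _ hm1 (by omega), gN_eval_one P z K i (by omega) hi]
      rw [hval N x, hval M y]
    have htend : Filter.Tendsto (fun k : ℕ => (2:ℝ)⁻¹ ^ (k+1)) atTop (nhds 0) :=
      (tendsto_pow_atTop_nhds_zero_of_lt_one (by norm_num : (0:ℝ) ≤ 2⁻¹)
        (by norm_num)).comp (tendsto_add_atTop_nat 1)
    exact ge_of_tendsto' htend key
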